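/- arXiv:math/0603704 — 2 statements merged into one kernel-verified Lean document; each statement's English description precedes it below -/
import Mathlib

section
/- DSC locality theorem, nodal part (eq. (1.5)): Assume the DSC setup. Fix a cell ζ ∈ M and m ∈ ℕ. Let (z^p, z^n) and (z'^p, z'^n) be two DSC processes evolving under the same reflection maps R_k, the same connection maps C_k, and the same node-boundary map nb, with incident and outgoing fields z_in, z_out and z'_in, z'_out defined by the scattering recursion. If z_in,q(k) = z'_in,q(k) for all ports q ∈ ∂ζ and all k ≤ m, then z^n_q(m) = z'^n_q(m) for all q ∈ ∂ζ, and moreover z^p_q(k) = z'^p_q(k) for all q ∈ ∂ζ and all k ≤ m. In other words, the nodal state of a cell at time mτ + τ/2 is a function only of the history of fields incident on the scattering channels of that cell. -/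
/-- DSC locality theorem, nodal part (eq. (1.5)): the nodal state of a cell ζ
at time mτ + τ/2 is a function only of the history of fields incident on the
scattering channels of that cell: two DSC processes evolving under the same
reflection maps `R`, connection maps `C` and node-boundary map `nb`, whose
incident fields agree on the ports of ζ up to time m, have equal nodal states
on ζ at time m (and equal port states on ζ up to time m). -/
theorem dsc_locality_nodal
    {V : Type*} [AddCommGroup V] {Q M : Type*}
    (nb : V → V) (cell : Q → M) (adj : Q → Q)
    (hadj : ∀ q, adj (adj q) = q)
    (R C : ℕ → (ℕ → Q → V) → Q → V)
    -- locality of the reflection maps: the component at port q of R m depends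
    -- only on the port history up to time m restricted to the ports of cell q
    (hRloc : ∀ m q (h h' : ℕ → Q → V),
      (∀ k ≤ m, ∀ r, cell r = cell q → h k r = h' k r) → R m h q = R m h' q)
    -- locality of the connection maps: the component at port q of C m depends
    -- only on the nodal history up to time m restricted to q and adj q
    (hCloc : ∀ m q (h h' : ℕ → Q → V),
      (∀ k ≤ m, ∀ r, (r = q ∨ r = adj q) → h k r = h' k r) → C m h q = C m h' q)
    -- first DSC process with its incident and outgoing fields
    (zp zn zin zout : ℕ → Q → V)
    (hzn : ∀ m q, zn m q = R m zp q)
    (hzp : ∀ m q, zp (m + 1) q = C m zn q)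
    (hin0 : ∀ q, zin 0 q = zp 0 q)
    (hout : ∀ m q, zout m q = zn m q - nb (zin m q))
    (hin : ∀ m q, zin (m + 1) q = zp (m + 1) q - nb (zout m q))
    -- second DSC process with its incident and outgoing fields
    (zp' zn' zin' zout' : ℕ → Q → V)
    (hzn' : ∀ m q, zn' m q = R m zp' q)
    (hzp' : ∀ m q, zp' (m + 1) q = C m zn' q)
    (hin0' : ∀ q, zin' 0 q = zp' 0 q)
    (hout' : ∀ m q, zout' m q = zn' m q - nb (zin' m q))
    (hin' : ∀ m q, zin' (m + 1) q = zp' (m + 1) q - nb (zout' m q))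
    -- a fixed cell ζ and time m, with equal incident histories on ∂ζ up to m
    (ζ : M) (m : ℕ)
    (hhist : ∀ q, cell q = ζ → ∀ k ≤ m, zin k q = zin' k q) :
    (∀ q, cell q = ζ → zn m q = zn' m q) ∧
      (∀ q, cell q = ζ → ∀ k ≤ m, zp k q = zp' k q) := by
  have hp : ∀ k, k ≤ m → ∀ q, cell q = ζ → zp k q = zp' k q := by
    intro k
    induction k using Nat.strong_induction_on with
    | _ k ih =>
      intro hkm q hq
      cases k with
      | zero =>
        have := hhist q hq 0 (Nat.zero_le _)
        rw [hin0, hin0'] at this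
        exact this
      | succ k =>
        have hznk : zn k q = zn' k q := by
          rw [hzn, hzn']
          refine hRloc k q zp zp' ?_
          intro j hj r hr
          exact ih j (Nat.lt_succ_of_le hj) (le_trans (Nat.le_trans hj (Nat.le_of_succ_le hkm)) le_rfl) r (hr.trans hq)
        have hink : zin k q = zin' k q := hhist q hq k (Nat.le_of_succ_le hkm)
        have hinS : zin (k+1) q = zin' (k+1) q := hhist q hq (k+1) hkm
        have e1 := hin k q
        have e2 := hin' k q
        have : zp (k+1) q = zin (k+1) q + nb (zout k q) := by rw [e1]; abel
        rw [this, hout, hink, hznk]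
        have : zp' (k+1) q = zin' (k+1) q + nb (zout' k q) := by rw [e2]; abel
        rw [this, hout', hinS]
    
  refine ⟨?_, fun q hq k hk => hp k hk q hq⟩
  intro q hq
  rw [hzn, hzn']
  refine hRloc m q zp zp' ?_
  intro j hj r hr
  exact hp j hj r (hr.trans hq)
end

section
/- DSC locality theorem, port part (eq. (1.6)): Assume the DSC setup. Fix a port q ∈ Q and m ∈ ℕ. Let (z^p, z^n) and (z'^p, z'^n) be two DSC processes evolving under the same reflection maps R_k, the same connection maps C_k, and the same node-boundary map nb, with incident and outgoing fields defined by the scattering recursion, and with equal initial port states z^p_r(0) = z'^p_r(0) for r ∈ {q, adj q}. If z_out,r(k) = z'_out,r(k) for all r ∈ {q, adj q} and all k ≤ m, then z^p_q(m+1) = z'^p_q(m+1), and moreover z^p_r(k) = z'^p_r(k) for all r ∈ {q, adj q} and all k ≤ m+1. In other words, the port state at time (m+1)τ is a function only of the history of outgoing nodal fields in the (at most two) cells adjacent to that port. -/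
/-- DSC locality theorem, port part (eq. (1.6)): the port state at a port q at
time (m+1)τ is a function only of the history of outgoing nodal fields in the
(at most two) cells adjacent to that port: two DSC processes evolving under the
same reflection maps `R`, connection maps `C` and node-boundary map `nb`, with
equal initial port states on {q, adj q} and whose outgoing fields agree on
{q, adj q} up to time m, have equal port states at q at time m+1 (and equal
port states on {q, adj q} up to time m+1). -/
theorem dsc_locality_port
    {V : Type*} [AddCommGroup V] {Q M : Type*}
    (nb : V → V) (cell : Q → M) (adj : Q → Q)
    (hadj : ∀ q, adj (adj q) = q)
    (R C : ℕ → (ℕ → Q → V) → Q → V)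
    -- locality of the reflection maps: the component at port q of R m depends
    -- only on the port history up to time m restricted to the ports of cell q
    (hRloc : ∀ m q (h h' : ℕ → Q → V),
      (∀ k ≤ m, ∀ r, cell r = cell q → h k r = h' k r) → R m h q = R m h' q)
    -- locality of the connection maps: the component at port q of C m depends
    -- only on the nodal history up to time m restricted to q and adj q
    (hCloc : ∀ m q (h h' : ℕ → Q → V),
      (∀ k ≤ m, ∀ r, (r = q ∨ r = adj q) → h k r = h' k r) → C m h q = C m h' q)
    -- first DSC process with its incident and outgoing fields
    (zp zn zin zout : ℕ → Q → V)
    (hzn : ∀ m q, zn m q = R m zp q)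
    (hzp : ∀ m q, zp (m + 1) q = C m zn q)
    (hin0 : ∀ q, zin 0 q = zp 0 q)
    (hout : ∀ m q, zout m q = zn m q - nb (zin m q))
    (hin : ∀ m q, zin (m + 1) q = zp (m + 1) q - nb (zout m q))
    -- second DSC process with its incident and outgoing fields
    (zp' zn' zin' zout' : ℕ → Q → V)
    (hzn' : ∀ m q, zn' m q = R m zp' q)
    (hzp' : ∀ m q, zp' (m + 1) q = C m zn' q)
    (hin0' : ∀ q, zin' 0 q = zp' 0 q)
    (hout' : ∀ m q, zout' m q = zn' m q - nb (zin' m q))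
    (hin' : ∀ m q, zin' (m + 1) q = zp' (m + 1) q - nb (zout' m q))
    -- a fixed port q and time m, with equal initial port states on {q, adj q}
    -- and equal outgoing histories on {q, adj q} up to time m
    (q : Q) (m : ℕ)
    (hinit : ∀ r, (r = q ∨ r = adj q) → zp 0 r = zp' 0 r)
    (hhist : ∀ r, (r = q ∨ r = adj q) → ∀ k ≤ m, zout k r = zout' k r) :
    zp (m + 1) q = zp' (m + 1) q ∧
      (∀ r, (r = q ∨ r = adj q) → ∀ k ≤ m + 1, zp k r = zp' k r) := by
  have key : ∀ k, k ≤ m + 1 → ∀ r, (r = q ∨ r = adj q) →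
      zp k r = zp' k r ∧ zin k r = zin' k r := by
    intro k
    induction k using Nat.strong_induction_on with
    | _ k ih =>
      intro hk r hr
      match k with
      | 0 => exact ⟨hinit r hr, by rw [hin0, hin0', hinit r hr]⟩
      | k + 1 =>
        -- equality of nodal states on {q, adj q} up to time k
        have hzneq : ∀ j ≤ k, ∀ s, (s = q ∨ s = adj q) → zn j s = zn' j s := by
          intro j hj s hs
          have h := ih j (Nat.lt_succ_of_le hj) (le_trans (le_trans hj (Nat.le_succ k)) hk) s hs
          have hz : zin j s = zin' j s := h.2
          have ho := hhist s hs j (le_trans hj (Nat.succ_le_succ_iff.mp hk))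
          have e1 := hout j s
          have e2 := hout' j s
          have : zn j s - nb (zin j s) = zn' j s - nb (zin' j s) := by
            rw [← e1, ← e2, ho]
          rw [hz] at this
          exact sub_left_injective this
        have hsub : ∀ s, s = r ∨ s = adj r → s = q ∨ s = adj q := by
          intro s hs
          rcases hr with h | h <;> rcases hs with h' | h' <;> subst h <;> subst h'
          · exact Or.inl rfl
          · exact Or.inr rfl
          · exact Or.inr rfl
          · exact Or.inl (hadj q)
        have hpeq : zp (k + 1) r = zp' (k + 1) r := by
          rw [hzp, hzp']
          exact hCloc k r zn zn' (fun j hj s hs => hzneq j hj s (hsub s hs))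
        refine ⟨hpeq, ?_⟩
        rw [hin, hin', hpeq, hhist r hr k (Nat.succ_le_succ_iff.mp hk)]
  exact ⟨(key (m + 1) le_rfl q (Or.inl rfl)).1,
    fun r hr k hk => (key k hk r hr).1⟩
end
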